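/- Let (Cₙ)ₙ be a direct system of cochain complexes over the truncated Novikov ring Λ_E, each splitting as a direct sum Cₙ = Cₙ^L ⊕ Cₙ^U of graded submodules, such that: (a) every component of the differential and of every transition map from Cₙ^L to C_m^U is zero in Λ_E (because its Novikov weight exceeds E), and (b) every transition map component Cₙ^U → C_{n+1}^U is zero in Λ_E. Then the inclusion of the subsystem (Cₙ^L) induces an isomorphism colimₙ Cₙ^L ≅ colimₙ Cₙ of complexes over Λ_E. -/
import Mathlib


noncomputable section

section IgnoringUpperOrbits

variable {R : Type*} [CommRing R]

/-- Composite transition maps of a direct system with one-step maps `t n : C n →ₗ C (n+1)`. -/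
def chainUp {C : ℕ → Type*} [∀ n, AddCommGroup (C n)] [∀ n, Module R (C n)]
    (t : ∀ n, C n →ₗ[R] C (n + 1)) : ∀ i j : ℕ, i ≤ j → C i →ₗ[R] C j := fun i _j h =>
  Nat.leRec (motive := fun j _ => C i →ₗ[R] C j) LinearMap.id
    (fun k _ g => (t k).comp g) h

variable (L U : ℕ → Type*)
  [∀ n, AddCommGroup (L n)] [∀ n, Module R (L n)]
  [∀ n, AddCommGroup (U n)] [∀ n, Module R (U n)]

/-- The lower-to-lower component of a map on `Cₙ = Cₙ^L ⊕ Cₙ^U`. -/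
def lowerPart {n m : ℕ} (T : (L n × U n) →ₗ[R] (L m × U m)) : L n →ₗ[R] L m :=
  (LinearMap.fst R (L m) (U m)).comp (T.comp (LinearMap.inl R (L n) (U n)))

end IgnoringUpperOrbits

section AuxIUO

variable {R : Type*} [CommRing R]

lemma chainUp_self {C : ℕ → Type*} [∀ n, AddCommGroup (C n)] [∀ n, Module R (C n)]
    (t : ∀ n, C n →ₗ[R] C (n + 1)) (i : ℕ) (h : i ≤ i) :
    chainUp t i i h = LinearMap.id := by
  simp [chainUp, Nat.leRec_self]

lemma chainUp_succ {C : ℕ → Type*} [∀ n, AddCommGroup (C n)] [∀ n, Module R (C n)]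
    (t : ∀ n, C n →ₗ[R] C (n + 1)) (i j : ℕ) (h : i ≤ j) (h2 : i ≤ j + 1) :
    chainUp t i (j + 1) h2 = (t j).comp (chainUp t i j h) := by
  simp [chainUp, Nat.leRec_succ _ _ h]

instance chainUp_directedSystem {C : ℕ → Type*} [∀ n, AddCommGroup (C n)] [∀ n, Module R (C n)]
    (t : ∀ n, C n →ₗ[R] C (n + 1)) :
    DirectedSystem C (fun i j h => chainUp t i j h) := by
  constructor
  · intro i x
    rw [chainUp_self]; rfl
  · intro k j i hij hjk x
    induction k, hjk using Nat.le_induction with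
    | base => rw [chainUp_self]; rfl
    | succ m hm ih =>
      rw [chainUp_succ t j m hm, chainUp_succ t i m (hij.trans hm)]
      simp [ih]

end AuxIUO

section AuxIUO2

variable {R : Type*} [CommRing R]
variable {L U : ℕ → Type*}
  [∀ n, AddCommGroup (L n)] [∀ n, Module R (L n)]
  [∀ n, AddCommGroup (U n)] [∀ n, Module R (U n)]
  (T : ∀ n, (L n × U n) →ₗ[R] (L (n + 1) × U (n + 1)))

lemma T_snd (hTLU : ∀ n (x : L n), (T n (x, 0)).2 = 0)
    (hTUU : ∀ n (u : U n), (T n (0, u)).2 = 0) (n : ℕ) (y : L n × U n) :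
    T n y = ((T n y).1, 0) := by
  refine Prod.ext rfl ?_
  have hy : y = ((y.1, 0) : L n × U n) + ((0, y.2) : L n × U n) := by simp
  rw [hy, map_add]
  show (T n (y.1, 0)).2 + (T n (0, y.2)).2 = 0
  rw [hTLU, hTUU, add_zero]

lemma chainUp_fst (hTLU : ∀ n (x : L n), (T n (x, 0)).2 = 0) (i : ℕ) :
    ∀ (j : ℕ) (h : i ≤ j) (x : L i),
      chainUp T i j h ((x, 0) : L i × U i)
        = (chainUp (fun n => lowerPart L U (T n)) i j h x, 0) := by
  intro j h x
  induction j, h using Nat.le_induction with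
  | base => rw [chainUp_self, chainUp_self]; rfl
  | succ m hm ih =>
    rw [chainUp_succ T i m hm, chainUp_succ (fun n => lowerPart L U (T n)) i m hm]
    simp only [LinearMap.comp_apply, ih]
    exact Prod.ext rfl (hTLU m _)

lemma chainUp_comm_D (D : ∀ n, (L n × U n) →ₗ[R] (L n × U n))
    (hTD : ∀ n, (T n).comp (D n) = (D (n + 1)).comp (T n)) (i : ℕ) :
    ∀ (j : ℕ) (h : i ≤ j),
      (chainUp T i j h).comp (D i) = (D j).comp (chainUp T i j h) := by
  intro j h
  induction j, h using Nat.le_induction with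
  | base => rw [chainUp_self]; ext x <;> rfl
  | succ m hm ih =>
    rw [chainUp_succ T i m hm, LinearMap.comp_assoc, ih, ← LinearMap.comp_assoc,
      hTD m, LinearMap.comp_assoc]

end AuxIUO2

/-- "ignoring upper orbits".  Let `(Cₙ)` be a direct system of cochain
complexes over the truncated Novikov ring `Λ_E` (here an arbitrary ring `R`, the vanishing of
the relevant components over `Λ_E` being taken as hypotheses), each splitting as
`Cₙ = Cₙ^L ⊕ Cₙ^U`, such that (a) every component of the differential and of every transition
map from `Cₙ^L` to `C_m^U` vanishes (its Novikov weight exceeds `E`), and (b) every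
upper-to-upper transition map component `Cₙ^U → C_{n+1}^U` vanishes.  Then the inclusion of
the lower subsystem `(Cₙ^L)` induces an isomorphism `colim Cₙ^L ≅ colim Cₙ` of complexes. -/
theorem ignoring_upper_orbits
    (R : Type*) [CommRing R]
    (L U : ℕ → Type*)
    [∀ n, AddCommGroup (L n)] [∀ n, Module R (L n)]
    [∀ n, AddCommGroup (U n)] [∀ n, Module R (U n)]
    -- transition maps and differentials of the direct system of complexes
    (T : ∀ n, (L n × U n) →ₗ[R] (L (n + 1) × U (n + 1)))
    (D : ∀ n, (L n × U n) →ₗ[R] (L n × U n))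
    (hTD : ∀ n, (T n).comp (D n) = (D (n + 1)).comp (T n))
    -- (a) lower-to-upper components of the differential and the transition maps vanish
    (hDLU : ∀ n (x : L n), (D n (x, 0)).2 = 0)
    (hTLU : ∀ n (x : L n), (T n (x, 0)).2 = 0)
    -- (b) upper-to-upper components of the transition maps vanish
    (hTUU : ∀ n (u : U n), (T n (0, u)).2 = 0) :
    -- the canonical map `colim Cₙ^L → colim Cₙ` induced by the inclusions is an isomorphism
    -- of complexes: it is bijective and intertwines the induced differentials
    ∃ (hg : ∀ (i j : ℕ) (hij : i ≤ j) (x : L i),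
        ((Module.DirectLimit.of R ℕ (fun n => L n × U n) (chainUp T) j).comp
          (LinearMap.inl R (L j) (U j))) (chainUp (fun n => lowerPart L U (T n)) i j hij x)
          = ((Module.DirectLimit.of R ℕ (fun n => L n × U n) (chainUp T) i).comp
              (LinearMap.inl R (L i) (U i))) x)
      (hgL : ∀ (i j : ℕ) (hij : i ≤ j) (x : L i),
        ((Module.DirectLimit.of R ℕ L (chainUp (fun n => lowerPart L U (T n))) j).comp
          (lowerPart L U (D j))) (chainUp (fun n => lowerPart L U (T n)) i j hij x)
          = ((Module.DirectLimit.of R ℕ L (chainUp (fun n => lowerPart L U (T n))) i).comp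
              (lowerPart L U (D i))) x)
      (hgC : ∀ (i j : ℕ) (hij : i ≤ j) (x : L i × U i),
        ((Module.DirectLimit.of R ℕ (fun n => L n × U n) (chainUp T) j).comp (D j))
            (chainUp T i j hij x)
          = ((Module.DirectLimit.of R ℕ (fun n => L n × U n) (chainUp T) i).comp (D i)) x),
      Function.Bijective
        (Module.DirectLimit.lift R ℕ L (chainUp (fun n => lowerPart L U (T n)))
          (fun n => (Module.DirectLimit.of R ℕ (fun n => L n × U n) (chainUp T) n).comp
            (LinearMap.inl R (L n) (U n))) hg) ∧
      (Module.DirectLimit.lift R ℕ L (chainUp (fun n => lowerPart L U (T n)))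
          (fun n => (Module.DirectLimit.of R ℕ (fun n => L n × U n) (chainUp T) n).comp
            (LinearMap.inl R (L n) (U n))) hg).comp
        (Module.DirectLimit.lift R ℕ L (chainUp (fun n => lowerPart L U (T n)))
          (fun n => (Module.DirectLimit.of R ℕ L (chainUp (fun n => lowerPart L U (T n))) n).comp
            (lowerPart L U (D n))) hgL)
      = (Module.DirectLimit.lift R ℕ (fun n => L n × U n) (chainUp T)
          (fun n => (Module.DirectLimit.of R ℕ (fun n => L n × U n) (chainUp T) n).comp (D n))
          hgC).comp
        (Module.DirectLimit.lift R ℕ L (chainUp (fun n => lowerPart L U (T n)))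
          (fun n => (Module.DirectLimit.of R ℕ (fun n => L n × U n) (chainUp T) n).comp
            (LinearMap.inl R (L n) (U n))) hg) := by
  classical
  have hDL : ∀ n (x : L n), D n ((x, 0) : L n × U n) = (lowerPart L U (D n) x, 0) :=
    fun n x => Prod.ext rfl (hDLU n x)
  set cL := chainUp (fun n => lowerPart L U (T n)) with hcL
  have hg : ∀ (i j : ℕ) (hij : i ≤ j) (x : L i),
      ((Module.DirectLimit.of R ℕ (fun n => L n × U n) (chainUp T) j).comp
        (LinearMap.inl R (L j) (U j))) (cL i j hij x)
        = ((Module.DirectLimit.of R ℕ (fun n => L n × U n) (chainUp T) i).comp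
            (LinearMap.inl R (L i) (U i))) x := by
    intro i j hij x
    simp only [LinearMap.comp_apply, LinearMap.inl_apply]
    rw [← chainUp_fst T hTLU i j hij x, Module.DirectLimit.of_f]
  have key : ∀ (i j : ℕ) (hij : i ≤ j) (x : L i),
      lowerPart L U (D j) (cL i j hij x) = cL i j hij (lowerPart L U (D i) x) := by
    intro i j hij x
    have h1 : lowerPart L U (D j) (cL i j hij x)
        = (D j (chainUp T i j hij ((x, 0) : L i × U i))).1 := by
      rw [chainUp_fst T hTLU i j hij x]; rfl
    have h2 : D j (chainUp T i j hij ((x, 0) : L i × U i))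
        = chainUp T i j hij (D i ((x, 0) : L i × U i)) :=
      (LinearMap.congr_fun (chainUp_comm_D T D hTD i j hij) ((x, 0) : L i × U i)).symm
    rw [h1, h2, hDL, chainUp_fst T hTLU]
  have hgL : ∀ (i j : ℕ) (hij : i ≤ j) (x : L i),
      ((Module.DirectLimit.of R ℕ L cL j).comp (lowerPart L U (D j))) (cL i j hij x)
        = ((Module.DirectLimit.of R ℕ L cL i).comp (lowerPart L U (D i))) x := by
    intro i j hij x
    simp only [LinearMap.comp_apply]
    rw [key i j hij x, Module.DirectLimit.of_f]
  have hgC : ∀ (i j : ℕ) (hij : i ≤ j) (x : L i × U i),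
      ((Module.DirectLimit.of R ℕ (fun n => L n × U n) (chainUp T) j).comp (D j))
          (chainUp T i j hij x)
        = ((Module.DirectLimit.of R ℕ (fun n => L n × U n) (chainUp T) i).comp (D i)) x := by
    intro i j hij x
    simp only [LinearMap.comp_apply]
    have h2 : D j (chainUp T i j hij x) = chainUp T i j hij (D i x) :=
      (LinearMap.congr_fun (chainUp_comm_D T D hTD i j hij) x).symm
    rw [h2, Module.DirectLimit.of_f]
  refine ⟨hg, hgL, hgC, ⟨?_, ?_⟩, ?_⟩
  · -- injective
    rw [injective_iff_map_eq_zero]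
    intro z
    induction z using Module.DirectLimit.induction_on with
    | ih i x =>
      intro hz
      rw [Module.DirectLimit.lift_of] at hz
      simp only [LinearMap.comp_apply, LinearMap.inl_apply] at hz
      obtain ⟨j, hij, hzero⟩ := Module.DirectLimit.of.zero_exact hz
      rw [chainUp_fst T hTLU i j hij x] at hzero
      have hx : cL i j hij x = 0 := congrArg Prod.fst hzero
      rw [← Module.DirectLimit.of_f (f := cL) (hij := hij) (x := x), hx, map_zero]
  · -- surjective
    intro z
    induction z using Module.DirectLimit.induction_on with
    | ih i y =>
      refine ⟨Module.DirectLimit.of R ℕ L cL (i + 1) ((T i y).1), ?_⟩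
      rw [Module.DirectLimit.lift_of]
      simp only [LinearMap.comp_apply, LinearMap.inl_apply]
      have h1 : chainUp T i (i + 1) (Nat.le_succ i) y = T i y := by
        rw [chainUp_succ T i i le_rfl, chainUp_self]; rfl
      rw [← T_snd T hTLU hTUU i y, ← h1, Module.DirectLimit.of_f]
  · -- commutes with differentials
    apply LinearMap.ext
    intro z
    induction z using Module.DirectLimit.induction_on with
    | ih n x =>
      simp only [LinearMap.comp_apply, Module.DirectLimit.lift_of]
      simp only [LinearMap.inl_apply]
      rw [hDL]
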